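/- If G is an infinite graph on vertex set of regular uncountable cardinality κ⁺ with no half-graph of length k for some finite k (i.e., the edge relation is k-stable), then G contains a clique or an independent set of size κ⁺. -/

import Mathlib

open Cardinal

/-- A maximal `r`-free subset of a `κ⁺`-sized set whose points have small
`r`-neighborhoods has size `κ⁺`. -/
lemma exists_big_free {V : Type*} {κ : Cardinal} (hκ : ℵ₀ ≤ κ)
    (S : Set V) (hS : #S = Order.succ κ) (r : V → V → Prop) (hr : Symmetric r)
    (hsmall : ∀ v ∈ S, #{u | u ∈ S ∧ r v u} ≤ κ) :
    ∃ T ⊆ S, #T = Order.succ κ ∧ T.Pairwise fun x y => ¬ r x y := by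
  have hrn : Symmetric fun x y => ¬ r x y := fun x y h h' => h (hr h')
  have hchain : ∀ c ⊆ {T : Set V | T ⊆ S ∧ T.Pairwise fun x y => ¬ r x y},
      IsChain (· ⊆ ·) c → ∃ ub ∈ {T : Set V | T ⊆ S ∧ T.Pairwise fun x y => ¬ r x y},
        ∀ s ∈ c, s ⊆ ub := by
    intro c hc hchain
    refine ⟨⋃₀ c, ⟨Set.sUnion_subset fun t ht => (hc ht).1, ?_⟩,
      fun s hs => Set.subset_sUnion_of_mem hs⟩
    intro x hx y hy hxy
    obtain ⟨t₁, ht₁, hxt⟩ := hx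
    obtain ⟨t₂, ht₂, hyt⟩ := hy
    rcases eq_or_ne t₁ t₂ with rfl | hne
    · exact (hc ht₁).2 hxt hyt hxy
    rcases hchain ht₁ ht₂ hne with h | h
    · exact (hc ht₂).2 (h hxt) hyt hxy
    · exact (hc ht₁).2 hxt (h hyt) hxy
  obtain ⟨T, hT⟩ := zorn_subset {T : Set V | T ⊆ S ∧ T.Pairwise fun x y => ¬ r x y} hchain
  obtain ⟨⟨hTS, hTp⟩, hTmax⟩ := hT
  -- every point of S is in T or r-related to a point of T
  have hcov : S ⊆ T ∪ ⋃ (t : T), {u | u ∈ S ∧ r (t : V) u} := by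
    intro v hv
    by_cases hvT : v ∈ T
    · exact Or.inl hvT
    right
    have hni : ¬ (insert v T).Pairwise fun x y => ¬ r x y := by
      intro hins
      exact hvT (hTmax ⟨Set.insert_subset hv hTS, hins⟩ (Set.subset_insert v T)
        (Set.mem_insert v T))
    haveI : Std.Symm (fun x y => ¬ r x y) := ⟨fun a b h => hrn h⟩
    rw [Set.pairwise_insert_of_symmetric] at hni
    push_neg at hni
    obtain ⟨t, ht, _, hrvt⟩ := hni hTp
    exact Set.mem_iUnion.2 ⟨⟨t, ht⟩, hv, hr hrvt⟩
  refine ⟨T, hTS, ?_, hTp⟩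
  have hTle : #T ≤ Order.succ κ := hS ▸ mk_le_mk_of_subset hTS
  rcases le_or_gt (#T) κ with hle | hlt
  · exfalso
    have h1 : #(⋃ (t : T), {u | u ∈ S ∧ r (t : V) u}) ≤ κ := by
      calc #(⋃ (t : T), {u | u ∈ S ∧ r (t : V) u})
          ≤ sum fun t : T => #{u | u ∈ S ∧ r (t : V) u} := mk_iUnion_le_sum_mk
        _ ≤ sum fun _ : T => κ := sum_le_sum _ _ fun t => hsmall t (hTS t.2)
        _ = #T * κ := sum_const' _ _
        _ ≤ κ * κ := mul_le_mul_left hle κ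
        _ = κ := mul_eq_self hκ
    have h2 : #S ≤ κ := by
      calc #S ≤ #(T ∪ ⋃ (t : T), {u | u ∈ S ∧ r (t : V) u} : Set V) :=
          mk_le_mk_of_subset hcov
        _ ≤ #T + #(⋃ (t : T), {u | u ∈ S ∧ r (t : V) u}) := mk_union_le _ _
        _ ≤ κ + κ := add_le_add hle h1
        _ = κ := add_eq_self hκ
    exact absurd (hS ▸ h2) (not_le.2 (Order.lt_succ κ))
  · exact le_antisymm hTle (Order.succ_le_of_lt hlt)

/-- An infinite graph of size `κ⁺` with no half-graph of length `k` contains a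
clique or independent set of size `κ⁺`. -/
theorem stable_infinite_ramsey {V : Type*} {κ : Cardinal} (hκ : ℵ₀ ≤ κ)
    (hV : #V = Order.succ κ) (G : SimpleGraph V) (k : ℕ)
    (hstable : ¬∃ (a b : Fin k → V), ∀ i j : Fin k,
      G.Adj (a i) (b j) ↔ i < j) :
    ∃ S : Set V, #S = Order.succ κ ∧
      (S.Pairwise G.Adj ∨ S.Pairwise fun x y => ¬ G.Adj x y) := by
  classical
  have hne : Nonempty V := by
    rw [← mk_ne_zero_iff, hV]
    exact ((Cardinal.aleph0_pos.trans_le hκ).trans (Order.lt_succ κ)).ne'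
  by_cases H : ∀ A : Set V, #A = Order.succ κ →
      ∃ v ∈ A, #(A ∩ {u | G.Adj v u} : Set V) = Order.succ κ ∧
        #(A \ {u | G.Adj v u} : Set V) = Order.succ κ
  · -- every big set has a mixed vertex: build a half-graph, contradiction
    exfalso
    choose! F hF1 hF2 hF3 using H
    let step : Set V → Set V := fun A =>
      (A \ {u | G.Adj (F A) u}) ∩ {u | G.Adj (F (A \ {u | G.Adj (F A) u})) u}
    let D : ℕ → Set V := fun n => step^[n] Set.univ
    let a : ℕ → V := fun n => F (D n \ {u | G.Adj (F (D n)) u})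
    let b : ℕ → V := fun n => F (D n)
    have hDsucc : ∀ n, D (n + 1) = step (D n) := fun n =>
      Function.iterate_succ_apply' step n Set.univ
    have hDcard : ∀ n, #(D n) = Order.succ κ := by
      intro n
      induction n with
      | zero => rw [show D 0 = Set.univ from rfl, mk_univ, hV]
      | succ n ih =>
        rw [hDsucc n]
        exact hF2 _ (hF3 _ ih)
    have hDa : ∀ n, D (n + 1) ⊆ {u | G.Adj (a n) u} := by
      intro n
      rw [hDsucc n]; exact Set.inter_subset_right
    have hDb : ∀ n, D (n + 1) ⊆ D n \ {u | G.Adj (b n) u} := by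
      intro n
      rw [hDsucc n]; exact Set.inter_subset_left
    have hmono : ∀ n : ℕ, ∀ i : ℕ, i ≤ n → D n ⊆ D i := by
      intro n
      induction n with
      | zero => intro i hi; rw [Nat.le_zero.mp hi]
      | succ n ih =>
        intro i hi
        rcases eq_or_lt_of_le hi with rfl | h
        · exact subset_rfl
        · exact ((hDb n).trans Set.diff_subset).trans (ih i (Nat.lt_succ_iff.mp h))
    have haD : ∀ n, a n ∈ D n \ {u | G.Adj (b n) u} :=
      fun n => hF1 _ (hF3 _ (hDcard n))
    have hbD : ∀ n, b n ∈ D n := fun n => hF1 _ (hDcard n)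
    have key : ∀ i j : ℕ, G.Adj (a i) (b j) ↔ i < j := by
      intro i j
      constructor
      · intro hadj
        by_contra hij
        push_neg at hij  -- j ≤ i
        have hai : a i ∈ D j \ {u | G.Adj (b j) u} := by
          rcases Nat.eq_or_lt_of_le hij with rfl | hlt
          · exact haD j
          · exact hDb j (hmono i (j + 1) hlt (haD i).1)
        exact hai.2 hadj.symm
      · intro hij
        exact hDa i (hmono j (i + 1) hij (hbD j))
    refine hstable ⟨fun i => a i, fun j => b j, fun i j => ?_⟩
    rw [Fin.lt_def]
    exact key i j
  · -- some big set has no mixed vertex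
    push_neg at H
    obtain ⟨A, hA, hmix⟩ := H
    have hsub : ∀ v, #(A ∩ {u | G.Adj v u} : Set V) ≤ Order.succ κ := fun v =>
      hA ▸ mk_le_mk_of_subset Set.inter_subset_left
    have hsub' : ∀ v, #(A \ {u | G.Adj v u} : Set V) ≤ Order.succ κ := fun v =>
      hA ▸ mk_le_mk_of_subset Set.diff_subset
    have hdichot : ∀ v ∈ A, #(A ∩ {u | G.Adj v u} : Set V) ≤ κ ∨
        #(A \ {u | G.Adj v u} : Set V) ≤ κ := by
      intro v hv
      by_cases h1 : #(A ∩ {u | G.Adj v u} : Set V) = Order.succ κ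
      · exact Or.inr (Order.le_of_lt_succ (lt_of_le_of_ne (hsub' v) (hmix v hv h1)))
      · exact Or.inl (Order.le_of_lt_succ (lt_of_le_of_ne (hsub v) h1))
    set S : Set V := {v | v ∈ A ∧ #(A ∩ {u | G.Adj v u} : Set V) ≤ κ} with hSdef
    by_cases hS : #S = Order.succ κ
    · -- independent set
      have hsm : ∀ v ∈ S, #{u | u ∈ S ∧ G.Adj v u} ≤ κ := by
        intro v hv
        refine le_trans (mk_le_mk_of_subset ?_) hv.2
        intro u hu
        exact ⟨hu.1.1, hu.2⟩
      obtain ⟨T, hTS, hTcard, hTp⟩ := exists_big_free hκ S hS G.Adj (fun _ _ h => h.symm) hsm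
      exact ⟨T, hTcard, Or.inr hTp⟩
    · -- clique
      have hSA : S ⊆ A := fun v hv => hv.1
      have hSle : #S ≤ κ :=
        Order.le_of_lt_succ (lt_of_le_of_ne (hA ▸ mk_le_mk_of_subset hSA) hS)
      have hAS : #(A \ S : Set V) = Order.succ κ := by
        have hle : #(A \ S : Set V) ≤ Order.succ κ :=
          hA ▸ mk_le_mk_of_subset Set.diff_subset
        rcases le_or_gt (#(A \ S : Set V)) κ with h | h
        · exfalso
          have hAle : #A ≤ κ := by
            calc #A = #(S ∪ (A \ S) : Set V) := by rw [Set.union_diff_cancel hSA]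
              _ ≤ #S + #(A \ S : Set V) := mk_union_le _ _
              _ ≤ κ + κ := add_le_add hSle h
              _ = κ := add_eq_self hκ
          exact absurd (hA ▸ hAle) (not_le.2 (Order.lt_succ κ))
        · exact le_antisymm hle (Order.succ_le_of_lt h)
      have hcos : ∀ v ∈ (A \ S : Set V),
          #{u | u ∈ (A \ S : Set V) ∧ (v ≠ u ∧ ¬ G.Adj v u)} ≤ κ := by
        intro v hv
        have hd : #(A \ {u | G.Adj v u} : Set V) ≤ κ := by
          rcases hdichot v hv.1 with h | h
          · exact absurd ⟨hv.1, h⟩ hv.2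
          · exact h
        refine le_trans (mk_le_mk_of_subset ?_) hd
        intro u hu
        exact ⟨hu.1.1, hu.2.2⟩
      obtain ⟨T, hTS, hTcard, hTp⟩ := exists_big_free hκ (A \ S) hAS
        (fun x y => x ≠ y ∧ ¬ G.Adj x y)
        (fun x y h => ⟨h.1.symm, fun h' => h.2 h'.symm⟩) hcos
      refine ⟨T, hTcard, Or.inl ?_⟩
      intro x hx y hy hxy
      by_contra hadj
      exact hTp hx hy hxy ⟨hxy, hadj⟩
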